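/- If G is a complete multipartite graph, then χ_NL(μ(G)) = χ_NL(G) + 1, where μ(G) is the Mycielski graph of G. -/

import Mathlib

open SimpleGraph

/-- A coloring `c : V → Fin k` is a *neighbor-locating coloring* of `G` if it is proper and
any two distinct vertices with the same color have different sets of colors on their
open neighborhoods. -/
def IsNLColoring {V : Type*} (G : SimpleGraph V) {k : ℕ} (c : V → Fin k) : Prop :=
  (∀ u v : V, G.Adj u v → c u ≠ c v) ∧
  ∀ u v : V, u ≠ v → c u = c v → c '' (G.neighborSet u) ≠ c '' (G.neighborSet v)

/-- The neighbor-locating chromatic number: the least `k` admitting an NL-coloring. -/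
noncomputable def nlChromaticNumber {V : Type*} (G : SimpleGraph V) : ℕ :=
  sInf {k : ℕ | ∃ c : V → Fin k, IsNLColoring G c}

/-- A graph is complete multipartite iff it has at least one edge and any two distinct
non-adjacent vertices have identical open neighborhoods. -/
def IsCompleteMultipartiteGraph {V : Type*} (G : SimpleGraph V) : Prop :=
  (∃ u v : V, G.Adj u v) ∧
  ∀ u v : V, u ≠ v → ¬ G.Adj u v → G.neighborSet u = G.neighborSet v

set_option linter.unreachableTactic false in
set_option linter.unusedTactic false in
/-- The Mycielski graph of `G`: vertices `v_a = Sum.inl a`, shadow vertices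
`u_a = Sum.inr (Sum.inl a)` and the apex `w = Sum.inr (Sum.inr ())`. -/
def mycielskian {α : Type*} (G : SimpleGraph α) : SimpleGraph (α ⊕ α ⊕ Unit) where
  Adj x y :=
    match x, y with
    | Sum.inl a, Sum.inl b => G.Adj a b
    | Sum.inl a, Sum.inr (Sum.inl b) => G.Adj a b
    | Sum.inr (Sum.inl a), Sum.inl b => G.Adj a b
    | Sum.inr (Sum.inl _), Sum.inr (Sum.inr _) => True
    | Sum.inr (Sum.inr _), Sum.inr (Sum.inl _) => True
    | _, _ => False
  symm := by
    constructor
    rintro (a | a | a) (b | b | b) h <;>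
      first | exact G.adj_symm h | trivial | exact h.elim
  loopless := by
    constructor
    rintro (a | a | a) h <;> first | exact G.irrefl h | exact h.elim

set_option linter.unusedSectionVars false

section AuxNL

variable {α : Type*} [Fintype α] {G : SimpleGraph α}

lemma nl_inj_of_cm {k : ℕ} (hG : IsCompleteMultipartiteGraph G)
    {c : α → Fin k} (hc : IsNLColoring G c) : Function.Injective c := by
  intro a b hab
  by_contra hne
  by_cases hadj : G.Adj a b
  · exact hc.1 a b hadj hab
  · exact hc.2 a b hne hab (by rw [hG.2 a b hne hadj])

lemma nl_cm_eq_card (hG : IsCompleteMultipartiteGraph G) :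
    nlChromaticNumber G = Fintype.card α := by
  have hmem : Fintype.card α ∈ {k : ℕ | ∃ c : α → Fin k, IsNLColoring G c} := by
    refine ⟨⇑(Fintype.equivFin α), ?_, ?_⟩
    · intro u v h hcu
      exact G.ne_of_adj h ((Fintype.equivFin α).injective hcu)
    · intro u v hne hcu
      exact absurd ((Fintype.equivFin α).injective hcu) hne
  refine le_antisymm (Nat.sInf_le hmem) ?_
  obtain ⟨c, hc⟩ := Nat.sInf_mem (⟨_, hmem⟩ : Set.Nonempty _)
  simpa [nlChromaticNumber] using Fintype.card_le_of_injective c (nl_inj_of_cm hG hc)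

lemma myc_lower (hG : IsCompleteMultipartiteGraph G) {k : ℕ}
    (c : α ⊕ α ⊕ Unit → Fin k) (hc : IsNLColoring (mycielskian G) c) :
    Fintype.card α + 1 ≤ k := by
  classical
  set cv : α → Fin k := fun a => c (Sum.inl a) with hcv
  have hinj : Function.Injective cv := by
    intro a b hab
    by_contra hne
    by_cases hadj : G.Adj a b
    · exact hc.1 (Sum.inl a) (Sum.inl b) hadj hab
    · have hN := Set.ext_iff.mp (hG.2 a b hne hadj)
      have hNs : (mycielskian G).neighborSet (Sum.inl a)
          = (mycielskian G).neighborSet (Sum.inl b) := by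
        ext x
        rcases x with j | j | u
        · exact hN j
        · exact hN j
        · exact Iff.rfl
      exact hc.2 (Sum.inl a) (Sum.inl b) (by simpa using hne) hab (by rw [hNs])
  have hnk : Fintype.card α ≤ k := by
    simpa using Fintype.card_le_of_injective cv hinj
  rcases Nat.lt_or_ge k (Fintype.card α + 1) with hlt | hge
  · exfalso
    have hkn : k = Fintype.card α := le_antisymm (Nat.lt_succ_iff.mp hlt) hnk
    subst hkn
    have hsurj : Function.Surjective cv :=
      ((Fintype.bijective_iff_injective_and_card cv).2 ⟨hinj, by simp⟩).2
    set w : α ⊕ α ⊕ Unit := Sum.inr (Sum.inr ()) with hw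
    -- Step A
    have stepA : ∀ j : α, ∃ m, cv m = c (Sum.inr (Sum.inl j)) ∧ ¬ G.Adj j m := by
      intro j
      obtain ⟨m, hm⟩ := hsurj (c (Sum.inr (Sum.inl j)))
      refine ⟨m, hm, fun hadj => ?_⟩
      exact hc.1 (Sum.inr (Sum.inl j)) (Sum.inl m) hadj hm.symm
    -- Step B
    have stepB : ∀ m : α, c '' ((mycielskian G).neighborSet (Sum.inl m))
        = cv '' (G.neighborSet m) := by
      intro m
      apply Set.Subset.antisymm
      · rintro x ⟨y, hy, rfl⟩
        rcases y with j | j | u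
        · exact ⟨j, hy, rfl⟩
        · have hy' : G.Adj m j := hy
          obtain ⟨m', hm', hnadj⟩ := stepA j
          have hadj_mm' : G.Adj m m' := by
            by_cases hjm : j = m'
            · subst hjm; exact hy'
            · have hN := hG.2 j m' hjm hnadj
              have hmem : m ∈ G.neighborSet j := G.adj_symm hy'
              rw [hN] at hmem
              exact G.adj_symm hmem
          exact ⟨m', hadj_mm', hm'⟩
        · exact hy.elim
      · rintro x ⟨j, hj, rfl⟩
        exact ⟨Sum.inl j, hj, rfl⟩
    -- Step C
    have stepC : ∀ i : α, c '' ((mycielskian G).neighborSet (Sum.inr (Sum.inl i)))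
        = insert (c w) (cv '' (G.neighborSet i)) := by
      intro i
      apply Set.Subset.antisymm
      · rintro x ⟨y, hy, rfl⟩
        rcases y with j | j | u
        · exact Or.inr ⟨j, hy, rfl⟩
        · exact hy.elim
        · cases u; exact Or.inl rfl
      · rintro x (rfl | ⟨j, hj, rfl⟩)
        · exact ⟨w, trivial, rfl⟩
        · exact ⟨Sum.inl j, hj, rfl⟩
    -- Step D
    have stepD : ∀ i : α, c w ∉ cv '' (G.neighborSet i) := by
      intro i hmem
      obtain ⟨m, hm, hnadj⟩ := stepA i
      have hSeq : G.neighborSet i = G.neighborSet m := by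
        by_cases him : i = m
        · rw [him]
        · exact hG.2 i m him hnadj
      have hne : (Sum.inr (Sum.inl i) : α ⊕ α ⊕ Unit) ≠ Sum.inl m := by simp
      have := hc.2 _ _ hne hm.symm
      apply this
      rw [stepC i, stepB m, ← hSeq, Set.insert_eq_self.mpr hmem]
    -- Step E
    obtain ⟨j0, hj0⟩ := hsurj (c w)
    obtain ⟨u0, v0, huv⟩ := hG.1
    have key : ∀ i, ¬ G.Adj i j0 := fun i hadj => stepD i ⟨j0, hadj, hj0⟩
    by_cases h1 : G.Adj j0 u0
    · exact key u0 (G.adj_symm h1)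
    · by_cases h2 : j0 = u0
      · exact key v0 (h2 ▸ G.adj_symm huv)
      · have hN := hG.2 j0 u0 h2 h1
        have hv : v0 ∈ G.neighborSet j0 := by rw [hN]; exact huv
        exact key v0 (G.adj_symm hv)
  · exact hge

noncomputable def cUp (α : Type*) [Fintype α] : α ⊕ α ⊕ Unit → Fin (Fintype.card α + 1) :=
  fun x => match x with
  | Sum.inl a => (Fintype.equivFin α a).castSucc
  | Sum.inr (Sum.inl a) => (Fintype.equivFin α a).castSucc
  | Sum.inr (Sum.inr _) => Fin.last _

lemma cUp_isNL (G : SimpleGraph α) : IsNLColoring (mycielskian G) (cUp α) := by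
  have einj := (Fintype.equivFin α).injective
  have hcs : ∀ a b : α, (Fintype.equivFin α a).castSucc = (Fintype.equivFin α b).castSucc → a = b :=
    fun a b h => einj (Fin.castSucc_injective _ h)
  constructor
  · rintro (a | a | a) (b | b | b) hadj hcol
    · exact G.ne_of_adj hadj (hcs a b hcol)
    · exact G.ne_of_adj hadj (hcs a b hcol)
    · exact hadj
    · exact G.ne_of_adj hadj (hcs a b hcol)
    · exact hadj
    · exact (Fin.castSucc_lt_last _).ne hcol
    · exact hadj
    · exact (Fin.castSucc_lt_last _).ne' hcol
    · exact hadj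
  · have key : ∀ a b : α, cUp α '' ((mycielskian G).neighborSet (Sum.inl a))
        ≠ cUp α '' ((mycielskian G).neighborSet (Sum.inr (Sum.inl b))) := by
      intro a b heq
      have hmem : (Fin.last (Fintype.card α)) ∈
          cUp α '' ((mycielskian G).neighborSet (Sum.inr (Sum.inl b))) :=
        ⟨Sum.inr (Sum.inr ()), trivial, rfl⟩
      rw [← heq] at hmem
      obtain ⟨y, hy, hce⟩ := hmem
      rcases y with j | j | u
      · exact (Fin.castSucc_lt_last _).ne hce
      · exact (Fin.castSucc_lt_last _).ne hce
      · exact hy.elim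
    rintro (a | a | a) (b | b | b) hne hcol
    · exact absurd (congrArg Sum.inl (hcs a b hcol)) hne
    · exact key a b
    · exact absurd hcol (Fin.castSucc_lt_last _).ne
    · exact (key b a).symm
    · exact absurd (congrArg (Sum.inr ∘ Sum.inl) (hcs a b hcol)) hne
    · exact absurd hcol (Fin.castSucc_lt_last _).ne
    · exact absurd hcol.symm (Fin.castSucc_lt_last _).ne
    · exact absurd hcol.symm (Fin.castSucc_lt_last _).ne
    · exact absurd (by cases a; cases b; rfl) hne

end AuxNL

/-- If `G` is a complete multipartite graph, then `χ_NL(μ(G)) = χ_NL(G) + 1`. -/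
theorem nlChromaticNumber_mycielskian_of_completeMultipartite
    {α : Type*} [Fintype α] (G : SimpleGraph α)
    (hG : IsCompleteMultipartiteGraph G) :
    nlChromaticNumber (mycielskian G) = nlChromaticNumber G + 1 := by
  rw [nl_cm_eq_card hG]
  have hmem : Fintype.card α + 1 ∈
      {k : ℕ | ∃ c : α ⊕ α ⊕ Unit → Fin k, IsNLColoring (mycielskian G) c} :=
    ⟨cUp α, cUp_isNL G⟩
  refine le_antisymm (Nat.sInf_le hmem) ?_
  obtain ⟨c, hc⟩ := Nat.sInf_mem (⟨_, hmem⟩ : Set.Nonempty _)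
  exact myc_lower hG c hc
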